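/- For a one-parameter exponential family, if |A'(θ') − A'(θ)| ≤ (1/2)·A''(θ)·κ(θ), then |θ' − θ| ≤ κ(θ) (i.e., θ' lies in the interval Φ(θ) = [θ − κ(θ), θ + κ(θ)]). -/

import Mathlib

open Real

/-- For a one-parameter exponential family, if `|A'(θ') − A'(θ)| ≤ (1/2)·A''(θ)·κ(θ)`,
then `|θ' − θ| ≤ κ(θ)`, i.e. `θ'` lies in `Φ(θ) = [θ − κ(θ), θ + κ(θ)]`. -/
theorem mean_close_implies_param_close (A' A'' : ℝ → ℝ) (θ θ' κ : ℝ) (hκ : 0 < κ)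
    (hA'' : ∀ t, HasDerivAt A' (A'' t) t)
    (hpos : ∀ t, 0 < A'' t)
    (hstab : ∀ t ∈ Set.Icc (θ - κ) (θ + κ), A'' θ / A'' t ∈ Set.Icc (1 / 2 : ℝ) 2)
    (hclose : |A' θ' - A' θ| ≤ (1 / 2) * A'' θ * κ) :
    |θ' - θ| ≤ κ := by
  set c : ℝ := A'' θ / 2 with hc
  have hcpos : 0 < c := by rw [hc]; linarith [hpos θ]
  -- A' is strictly monotone
  have hmono : StrictMono A' :=
    strictMono_of_deriv_pos fun x => by rw [(hA'' x).deriv]; exact hpos x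
  -- g t = A' t - c * t is monotone on Icc
  set g : ℝ → ℝ := fun t => A' t - c * t with hg
  have hgd : ∀ t, HasDerivAt g (A'' t - c) t := fun t => by
    have h := (hA'' t).sub ((hasDerivAt_id t).const_mul c)
    rw [mul_one] at h
    exact h.congr_of_eventuallyEq (Filter.Eventually.of_forall fun x => by simp [hg])
  have hgmono : MonotoneOn g (Set.Icc (θ - κ) (θ + κ)) := by
    apply monotoneOn_of_deriv_nonneg (convex_Icc _ _)
    · exact fun t _ => (hgd t).continuousAt.continuousWithinAt
    · exact fun t _ => (hgd t).differentiableAt.differentiableWithinAt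
    · intro t ht
      rw [interior_Icc] at ht
      rw [(hgd t).deriv]
      have h2 := (hstab t (Set.Ioo_subset_Icc_self ht)).2
      have ht' := hpos t
      have : A'' θ ≤ 2 * A'' t := by
        rw [div_le_iff₀ ht'] at h2; linarith
      simp only [hc]; linarith
  have hmemL : θ - κ ∈ Set.Icc (θ - κ) (θ + κ) := by constructor <;> linarith
  have hmemM : θ ∈ Set.Icc (θ - κ) (θ + κ) := by constructor <;> linarith
  have hmemR : θ + κ ∈ Set.Icc (θ - κ) (θ + κ) := by constructor <;> linarith
  have hR : A' θ + c * κ ≤ A' (θ + κ) := by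
    have := hgmono hmemM hmemR (by linarith)
    simp only [hg] at this
    nlinarith
  have hL : A' (θ - κ) ≤ A' θ - c * κ := by
    have := hgmono hmemL hmemM (by linarith)
    simp only [hg] at this
    nlinarith
  have habs := abs_le.mp hclose
  have hcκ : (1 / 2) * A'' θ * κ = c * κ := by rw [hc]; ring
  rw [hcκ] at habs
  rw [abs_le]
  constructor
  · by_contra h
    push_neg at h
    have : A' θ' < A' (θ - κ) := hmono (by linarith)
    linarith [habs.1]
  · by_contra h
    push_neg at h
    have : A' (θ + κ) < A' θ' := hmono (by linarith)
    linarith [habs.2]
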